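/- Let n ≥ 1, let p_1 < ⋯ < p_n and r_1, …, r_n be real numbers, and let a ≥ 0, ε > 0, C ≥ 0. For reals p_1 < ⋯ < p_n and ρ ≤ 0, set m_{AB}(ρ) := min{1, exp(2(p_B − p_A)ρ)}. Then there exist constants C′ ≥ 0 and a′ ≥ 0, depending only on n, the p_A, the r_A, C, a and ε, such that the following holds for every ρ ≤ 0: if μ̄_1, …, μ̄_n are reals with |μ̄_A − p_A ρ − r_A| ≤ C ⟨ρ⟩^a e^{2ερ} for all A, and Y is a real n×n matrix with |Y_{CB} − δ_{CB}| ≤ C ⟨ρ⟩^a e^{2ερ} m_{CB}(ρ) for all C, B, then the quantities b_{AB} := e^{−2 p_{max(A,B)} ρ} ∑_{C=1}^{n} e^{2 μ̄_C} Y_{CA} Y_{CB} satisfy |b_{AB} − e^{2 r_A} δ_{AB}| ≤ C′ ⟨ρ⟩^{a′} e^{2ερ} for all A, B ∈ {1,…,n}. -/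
import Mathlib


/-- The Japanese bracket `⟨x⟩ = (1 + x²)^{1/2}`. -/
noncomputable def jbr (x : ℝ) : ℝ := Real.sqrt (1 + x ^ 2)

lemma jbr_nonneg (x : ℝ) : 0 ≤ jbr x := Real.sqrt_nonneg _

lemma abs_exp_sub_one_le' (u : ℝ) : |Real.exp u - 1| ≤ |u| * Real.exp |u| := by
  rcases le_or_gt 0 u with hu | hu
  · rw [abs_of_nonneg hu, abs_of_nonneg (sub_nonneg.2 (Real.one_le_exp hu))]
    have h := Real.add_one_le_exp (-u)
    rw [Real.exp_neg] at h
    have h2 := mul_le_mul_of_nonneg_right h (Real.exp_pos u).le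
    rw [inv_mul_cancel₀ (Real.exp_pos u).ne'] at h2
    nlinarith
  · rw [abs_of_neg hu, abs_of_nonpos (sub_nonpos.2 (by
      rw [← Real.exp_zero]; exact Real.exp_le_exp.2 hu.le))]
    have h := Real.add_one_le_exp u
    have h3 : 1 ≤ Real.exp (-u) := Real.one_le_exp (by linarith)
    nlinarith

/-- Asymptotic diagonal form of the rescaled metric components. -/
theorem rescaled_metric_diagonal_limit
    (n : ℕ) (hn : 1 ≤ n) (p r : Fin n → ℝ) (hp : StrictMono p)
    (a ε C : ℝ) (ha : 0 ≤ a) (hε : 0 < ε) (hC : 0 ≤ C) :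
    ∃ C' a' : ℝ, 0 ≤ C' ∧ 0 ≤ a' ∧
      ∀ ρ ≤ (0 : ℝ), ∀ (μ : Fin n → ℝ) (Y : Fin n → Fin n → ℝ),
        (∀ A, |μ A - p A * ρ - r A| ≤ C * jbr ρ ^ a * Real.exp (2 * ε * ρ)) →
        (∀ D B, |Y D B - (if D = B then 1 else 0)| ≤
          C * jbr ρ ^ a * Real.exp (2 * ε * ρ) *
            min 1 (Real.exp (2 * (p B - p D) * ρ))) →
        ∀ A B,
          |Real.exp (-2 * p (max A B) * ρ) *
              (∑ D, Real.exp (2 * μ D) * Y D A * Y D B) -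
            (if A = B then Real.exp (2 * r A) else 0)| ≤
          C' * jbr ρ ^ a' * Real.exp (2 * ε * ρ) := by
  classical
  set c : ℝ := min 1 (2 * ε / (a + 1)) with hc_def
  have hc0 : 0 < c := lt_min one_pos (by positivity)
  have hc1 : c ≤ 1 := min_le_left _ _
  have hca : c * a ≤ 2 * ε := by
    have h1 : c ≤ 2 * ε / (a + 1) := min_le_right _ _
    have h2 : c * (a + 1) ≤ 2 * ε := by
      rw [le_div_iff₀ (by positivity : (0:ℝ) < a + 1)] at h1
      linarith
    nlinarith [hc0.le]
  set S : ℝ := C * c ^ (-a : ℝ) with hS_def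
  have hS0 : 0 ≤ S := mul_nonneg hC (Real.rpow_nonneg hc0.le _)
  set R : ℝ := ∑ D : Fin n, Real.exp (2 * r D) with hR_def
  have hR0 : 0 ≤ R := Finset.sum_nonneg fun i _ => (Real.exp_pos _).le
  have hKpos : 0 ≤ (n : ℝ) * (R * Real.exp (2 * S) * (4 + S)) * C := by
    have : (0:ℝ) ≤ 4 + S := by linarith
    have := (Real.exp_pos (2 * S)).le
    positivity
  refine ⟨(n : ℝ) * (R * Real.exp (2 * S) * (4 + S)) * C, a, hKpos, ha, ?_⟩
  intro ρ hρ μ Y hμ hY A B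
  set X : ℝ := C * jbr ρ ^ a * Real.exp (2 * ε * ρ) with hX_def
  have hX0 : 0 ≤ X := by
    rw [hX_def]
    exact mul_nonneg (mul_nonneg hC (Real.rpow_nonneg (jbr_nonneg ρ) _))
      (Real.exp_pos _).le
  -- X ≤ S
  have hb1 : jbr ρ ≤ 1 - ρ := by
    rw [jbr, show (1:ℝ) - ρ = Real.sqrt ((1 - ρ) ^ 2) from
      (Real.sqrt_sq (by linarith)).symm]
    exact Real.sqrt_le_sqrt (by nlinarith)
  have hcinv : 1 ≤ c⁻¹ := by
    have hci : c * c⁻¹ = 1 := mul_inv_cancel₀ hc0.ne'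
    nlinarith [mul_nonneg (inv_pos.2 hc0).le (sub_nonneg.2 hc1)]
  have hb2 : (1:ℝ) - ρ ≤ c⁻¹ * Real.exp (-(c * ρ)) := by
    have h := Real.add_one_le_exp (-(c * ρ))
    have h2 := mul_le_mul_of_nonneg_left h (inv_pos.2 hc0).le
    have h3 : c⁻¹ * (c * ρ) = ρ := by field_simp
    nlinarith
  have hb3 : jbr ρ ^ a ≤ c ^ (-a : ℝ) * Real.exp (-(c * ρ) * a) := by
    calc jbr ρ ^ a ≤ (c⁻¹ * Real.exp (-(c * ρ))) ^ a :=
          Real.rpow_le_rpow (jbr_nonneg ρ) (hb1.trans hb2) ha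
      _ = c ^ (-a : ℝ) * Real.exp (-(c * ρ) * a) := by
          rw [Real.mul_rpow (inv_nonneg.2 hc0.le) (Real.exp_pos _).le,
            Real.inv_rpow hc0.le, ← Real.rpow_neg hc0.le, ← Real.exp_mul]
  have hb4 : jbr ρ ^ a * Real.exp (2 * ε * ρ) ≤ c ^ (-a : ℝ) := by
    have h5 : Real.exp (-(c * ρ) * a) * Real.exp (2 * ε * ρ) ≤ 1 := by
      rw [← Real.exp_add, ← Real.exp_zero]
      apply Real.exp_le_exp.2
      nlinarith [mul_nonneg (sub_nonneg.2 hca) (neg_nonneg.2 hρ)]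
    calc jbr ρ ^ a * Real.exp (2 * ε * ρ)
        ≤ (c ^ (-a : ℝ) * Real.exp (-(c * ρ) * a)) * Real.exp (2 * ε * ρ) :=
          mul_le_mul_of_nonneg_right hb3 (Real.exp_pos _).le
      _ = c ^ (-a : ℝ) * (Real.exp (-(c * ρ) * a) * Real.exp (2 * ε * ρ)) := by ring
      _ ≤ c ^ (-a : ℝ) * 1 := mul_le_mul_of_nonneg_left h5 (Real.rpow_nonneg hc0.le _)
      _ = c ^ (-a : ℝ) := mul_one _
  have hXS : X ≤ S := by
    rw [hX_def, hS_def]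
    calc C * jbr ρ ^ a * Real.exp (2 * ε * ρ)
        = C * (jbr ρ ^ a * Real.exp (2 * ε * ρ)) := by ring
      _ ≤ C * c ^ (-a : ℝ) := mul_le_mul_of_nonneg_left hb4 hC
  have hG : ∀ D : Fin n, Real.exp (2 * r D) ≤ R := fun D =>
    Finset.single_le_sum (fun i _ => (Real.exp_pos (2 * r i)).le) (Finset.mem_univ D)
  -- per-term bound
  have key : ∀ D : Fin n,
      |Real.exp (-2 * p (max A B) * ρ) * (Real.exp (2 * μ D) * Y D A * Y D B) -
        (if A = B ∧ D = A then Real.exp (2 * r A) else 0)| ≤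
      R * Real.exp (2 * S) * (4 + S) * X := by
    intro D
    have hE : Real.exp (2 * (μ D - p D * ρ - r D)) ≤ Real.exp (2 * S) := by
      apply Real.exp_le_exp.2
      have h := hμ D
      have := le_abs_self (μ D - p D * ρ - r D)
      linarith
    by_cases hcase : A = B ∧ D = A
    · obtain ⟨hAB, hDA⟩ := hcase
      subst hAB; subst hDA
      rw [if_pos ⟨rfl, rfl⟩, max_self]
      have hY1 : |Y D D - 1| ≤ X := by
        have h := hY D D
        rw [if_pos rfl] at h
        calc |Y D D - 1| ≤ X * min 1 (Real.exp (2 * (p D - p D) * ρ)) := h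
          _ ≤ X * 1 := mul_le_mul_of_nonneg_left (min_le_left _ _) hX0
          _ = X := mul_one _
      have hYabs : |Y D D| ≤ 1 + S := by
        have h := abs_add_le (Y D D - 1) 1
        simp only [sub_add_cancel, abs_one] at h
        linarith
      have hsq : |(Y D D) ^ 2 - 1| ≤ X * (2 + S) := by
        have heq : (Y D D) ^ 2 - 1 = (Y D D - 1) * (Y D D + 1) := by ring
        rw [heq, abs_mul]
        have h2 : |Y D D + 1| ≤ 2 + S := by
          have h := abs_add_le (Y D D) 1
          simp only [abs_one] at h
          linarith
        exact mul_le_mul hY1 h2 (abs_nonneg _) hX0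
      set d : ℝ := μ D - p D * ρ - r D with hd
      have hdX : |d| ≤ X := hμ D
      have hexp1 : Real.exp (2 * d) ≤ Real.exp (2 * S) := hE
      have hexp2 : |Real.exp (2 * d) - 1| ≤ 2 * X * Real.exp (2 * S) := by
        have h := abs_exp_sub_one_le' (2 * d)
        have h1 : |2 * d| ≤ 2 * X := by
          rw [abs_mul, abs_two]; linarith
        have h2 : Real.exp |2 * d| ≤ Real.exp (2 * S) :=
          Real.exp_le_exp.2 (by linarith)
        calc |Real.exp (2 * d) - 1| ≤ |2 * d| * Real.exp |2 * d| := h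
          _ ≤ (2 * X) * Real.exp (2 * S) :=
            mul_le_mul h1 h2 (Real.exp_pos _).le (by linarith)
          _ = 2 * X * Real.exp (2 * S) := by ring
      have e2 : Real.exp (-2 * p D * ρ) * (Real.exp (2 * μ D) * Y D D * Y D D) -
          Real.exp (2 * r D) =
          Real.exp (2 * r D) * (Real.exp (2 * d) * (Y D D) ^ 2 - 1) := by
        have he : Real.exp (-2 * p D * ρ) * Real.exp (2 * μ D) =
            Real.exp (2 * r D) * Real.exp (2 * d) := by
          rw [← Real.exp_add, ← Real.exp_add]
          congr 1
          rw [hd]; ring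
        linear_combination Y D D * Y D D * he
      rw [e2, abs_mul, abs_of_pos (Real.exp_pos _)]
      have hin : |Real.exp (2 * d) * (Y D D) ^ 2 - 1| ≤ Real.exp (2 * S) * (4 + S) * X := by
        have split : Real.exp (2 * d) * (Y D D) ^ 2 - 1 =
            Real.exp (2 * d) * ((Y D D) ^ 2 - 1) + (Real.exp (2 * d) - 1) := by ring
        rw [split]
        have hpart : |Real.exp (2 * d) * ((Y D D) ^ 2 - 1)| ≤
            Real.exp (2 * S) * (X * (2 + S)) := by
          rw [abs_mul, abs_of_pos (Real.exp_pos _)]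
          exact mul_le_mul hexp1 hsq (abs_nonneg _) (Real.exp_pos _).le
        calc |Real.exp (2 * d) * ((Y D D) ^ 2 - 1) + (Real.exp (2 * d) - 1)|
            ≤ |Real.exp (2 * d) * ((Y D D) ^ 2 - 1)| + |Real.exp (2 * d) - 1| :=
              abs_add_le _ _
          _ ≤ Real.exp (2 * S) * (X * (2 + S)) + 2 * X * Real.exp (2 * S) := by
              linarith
          _ = Real.exp (2 * S) * (4 + S) * X := by ring
      calc Real.exp (2 * r D) * |Real.exp (2 * d) * (Y D D) ^ 2 - 1|
          ≤ R * (Real.exp (2 * S) * (4 + S) * X) :=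
            mul_le_mul (hG D) hin (abs_nonneg _) hR0
        _ = R * Real.exp (2 * S) * (4 + S) * X := by ring
    · -- off-diagonal / error terms
      rw [if_neg hcase, sub_zero]
      have hWm : ∀ i : Fin n, Real.exp (2 * (p D - p i) * ρ) *
          min 1 (Real.exp (2 * (p i - p D) * ρ)) ≤ 1 := by
        intro i
        calc Real.exp (2 * (p D - p i) * ρ) * min 1 (Real.exp (2 * (p i - p D) * ρ))
            ≤ Real.exp (2 * (p D - p i) * ρ) * Real.exp (2 * (p i - p D) * ρ) :=
              mul_le_mul_of_nonneg_left (min_le_right _ _) (Real.exp_pos _).le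
          _ = 1 := by
              rw [← Real.exp_add, show 2 * (p D - p i) * ρ + 2 * (p i - p D) * ρ = 0
                by ring, Real.exp_zero]
      have hMcases : max A B = A ∨ max A B = B := max_choice A B
      have hmA0 : 0 ≤ min 1 (Real.exp (2 * (p A - p D) * ρ)) :=
        le_min zero_le_one (Real.exp_pos _).le
      have hmB0 : 0 ≤ min 1 (Real.exp (2 * (p B - p D) * ρ)) :=
        le_min zero_le_one (Real.exp_pos _).le
      have hmA1 : min 1 (Real.exp (2 * (p A - p D) * ρ)) ≤ 1 := min_le_left _ _
      have hmB1 : min 1 (Real.exp (2 * (p B - p D) * ρ)) ≤ 1 := min_le_left _ _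
      obtain ⟨u, hu0, hWu, hYYu⟩ : ∃ u : ℝ, 0 ≤ u ∧
          Real.exp (2 * (p D - p (max A B)) * ρ) * u ≤ 1 ∧
          |Y D A| * |Y D B| ≤ (1 + S) * X * u := by
        rcases eq_or_ne D A with hDA | hDA
        · -- D = A, hence A ≠ B and D ≠ B
          have hAB : A ≠ B := fun h => hcase ⟨h, hDA⟩
          have hDB : D ≠ B := by rw [hDA]; exact hAB
          have h1 : |Y D A| ≤ 1 + X := by
            have h := hY D A
            rw [if_pos hDA] at h
            have habs := abs_add_le (Y D A - 1) 1
            simp only [sub_add_cancel, abs_one] at habs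
            have hmm := mul_le_mul_of_nonneg_left hmA1 hX0
            rw [mul_one] at hmm
            linarith
          have h2 : |Y D B| ≤ X * min 1 (Real.exp (2 * (p B - p D) * ρ)) := by
            have h := hY D B
            rw [if_neg hDB, sub_zero] at h
            exact h
          refine ⟨min 1 (Real.exp (2 * (p B - p D) * ρ)), hmB0, ?_, ?_⟩
          · rcases hMcases with hM | hM
            · rw [hM, hDA, show 2 * (p A - p A) * ρ = 0 by ring, Real.exp_zero, one_mul]
              exact min_le_left _ _
            · rw [hM]; exact hWm B
          · have hp2 := mul_le_mul h1 h2 (abs_nonneg _) (by linarith)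
            calc |Y D A| * |Y D B|
                ≤ (1 + X) * (X * min 1 (Real.exp (2 * (p B - p D) * ρ))) := hp2
              _ ≤ (1 + S) * (X * min 1 (Real.exp (2 * (p B - p D) * ρ))) :=
                  mul_le_mul_of_nonneg_right (by linarith) (mul_nonneg hX0 hmB0)
              _ = (1 + S) * X * min 1 (Real.exp (2 * (p B - p D) * ρ)) := by ring
        · rcases eq_or_ne D B with hDB | hDB
          · -- D = B, D ≠ A
            have h1 : |Y D B| ≤ 1 + X := by
              have h := hY D B
              rw [if_pos hDB] at h
              have habs := abs_add_le (Y D B - 1) 1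
              simp only [sub_add_cancel, abs_one] at habs
              have hmm := mul_le_mul_of_nonneg_left hmB1 hX0
              rw [mul_one] at hmm
              linarith
            have h2 : |Y D A| ≤ X * min 1 (Real.exp (2 * (p A - p D) * ρ)) := by
              have h := hY D A
              rw [if_neg hDA, sub_zero] at h
              exact h
            refine ⟨min 1 (Real.exp (2 * (p A - p D) * ρ)), hmA0, ?_, ?_⟩
            · rcases hMcases with hM | hM
              · rw [hM]; exact hWm A
              · rw [hM, hDB, show 2 * (p B - p B) * ρ = 0 by ring, Real.exp_zero, one_mul]
                exact min_le_left _ _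
            · have hp2 := mul_le_mul h2 h1 (abs_nonneg _) (mul_nonneg hX0 hmA0)
              calc |Y D A| * |Y D B|
                  ≤ (X * min 1 (Real.exp (2 * (p A - p D) * ρ))) * (1 + X) := hp2
                _ ≤ (X * min 1 (Real.exp (2 * (p A - p D) * ρ))) * (1 + S) :=
                    mul_le_mul_of_nonneg_left (by linarith) (mul_nonneg hX0 hmA0)
                _ = (1 + S) * X * min 1 (Real.exp (2 * (p A - p D) * ρ)) := by ring
          · -- D ≠ A, D ≠ B
            have h1 : |Y D A| ≤ X * min 1 (Real.exp (2 * (p A - p D) * ρ)) := by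
              have h := hY D A
              rw [if_neg hDA, sub_zero] at h
              exact h
            have h2 : |Y D B| ≤ X * min 1 (Real.exp (2 * (p B - p D) * ρ)) := by
              have h := hY D B
              rw [if_neg hDB, sub_zero] at h
              exact h
            refine ⟨min 1 (Real.exp (2 * (p A - p D) * ρ)) *
              min 1 (Real.exp (2 * (p B - p D) * ρ)), mul_nonneg hmA0 hmB0, ?_, ?_⟩
            · rcases hMcases with hM | hM
              · rw [hM]
                calc Real.exp (2 * (p D - p A) * ρ) *
                    (min 1 (Real.exp (2 * (p A - p D) * ρ)) *
                     min 1 (Real.exp (2 * (p B - p D) * ρ)))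
                    = (Real.exp (2 * (p D - p A) * ρ) *
                       min 1 (Real.exp (2 * (p A - p D) * ρ))) *
                      min 1 (Real.exp (2 * (p B - p D) * ρ)) := by ring
                  _ ≤ 1 * 1 := mul_le_mul (hWm A) hmB1 hmB0 zero_le_one
                  _ = 1 := one_mul _
              · rw [hM]
                calc Real.exp (2 * (p D - p B) * ρ) *
                    (min 1 (Real.exp (2 * (p A - p D) * ρ)) *
                     min 1 (Real.exp (2 * (p B - p D) * ρ)))
                    = (Real.exp (2 * (p D - p B) * ρ) *
                       min 1 (Real.exp (2 * (p B - p D) * ρ))) *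
                      min 1 (Real.exp (2 * (p A - p D) * ρ)) := by ring
                  _ ≤ 1 * 1 := mul_le_mul (hWm B) hmA1 hmA0 zero_le_one
                  _ = 1 := one_mul _
            · have hp2 := mul_le_mul h1 h2 (abs_nonneg _) (mul_nonneg hX0 hmA0)
              calc |Y D A| * |Y D B|
                  ≤ (X * min 1 (Real.exp (2 * (p A - p D) * ρ))) *
                    (X * min 1 (Real.exp (2 * (p B - p D) * ρ))) := hp2
                _ = (X * (min 1 (Real.exp (2 * (p A - p D) * ρ)) *
                    min 1 (Real.exp (2 * (p B - p D) * ρ)))) * X := by ring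
                _ ≤ (X * (min 1 (Real.exp (2 * (p A - p D) * ρ)) *
                    min 1 (Real.exp (2 * (p B - p D) * ρ)))) * (1 + S) :=
                    mul_le_mul_of_nonneg_left (by linarith)
                      (mul_nonneg hX0 (mul_nonneg hmA0 hmB0))
                _ = (1 + S) * X * (min 1 (Real.exp (2 * (p A - p D) * ρ)) *
                    min 1 (Real.exp (2 * (p B - p D) * ρ))) := by ring
      -- assemble
      have e1 : Real.exp (-2 * p (max A B) * ρ) * Real.exp (2 * μ D) =
          Real.exp (2 * (p D - p (max A B)) * ρ) *
          Real.exp (2 * (μ D - p D * ρ - r D)) * Real.exp (2 * r D) := by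
        simp only [← Real.exp_add]
        congr 1
        ring
      have habs : |Real.exp (-2 * p (max A B) * ρ) *
          (Real.exp (2 * μ D) * Y D A * Y D B)| =
          Real.exp (2 * (p D - p (max A B)) * ρ) *
          Real.exp (2 * (μ D - p D * ρ - r D)) * Real.exp (2 * r D) *
          (|Y D A| * |Y D B|) := by
        rw [abs_mul, abs_mul, abs_mul, abs_of_pos (Real.exp_pos _),
          abs_of_pos (Real.exp_pos _)]
        calc Real.exp (-2 * p (max A B) * ρ) *
            (Real.exp (2 * μ D) * |Y D A| * |Y D B|)
            = (Real.exp (-2 * p (max A B) * ρ) * Real.exp (2 * μ D)) *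
              (|Y D A| * |Y D B|) := by ring
          _ = _ := by rw [e1]
      rw [habs]
      have hEG0 : 0 ≤ Real.exp (2 * (μ D - p D * ρ - r D)) * Real.exp (2 * r D) *
          ((1 + S) * X) :=
        mul_nonneg (mul_nonneg (Real.exp_pos _).le (Real.exp_pos _).le)
          (mul_nonneg (by linarith) hX0)
      calc Real.exp (2 * (p D - p (max A B)) * ρ) *
          Real.exp (2 * (μ D - p D * ρ - r D)) * Real.exp (2 * r D) *
          (|Y D A| * |Y D B|)
          ≤ Real.exp (2 * (p D - p (max A B)) * ρ) *
            Real.exp (2 * (μ D - p D * ρ - r D)) * Real.exp (2 * r D) *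
            ((1 + S) * X * u) := by
            apply mul_le_mul_of_nonneg_left hYYu
            exact mul_nonneg (mul_nonneg (Real.exp_pos _).le (Real.exp_pos _).le)
              (Real.exp_pos _).le
        _ = (Real.exp (2 * (μ D - p D * ρ - r D)) * Real.exp (2 * r D) *
            ((1 + S) * X)) * (Real.exp (2 * (p D - p (max A B)) * ρ) * u) := by ring
        _ ≤ (Real.exp (2 * (μ D - p D * ρ - r D)) * Real.exp (2 * r D) *
            ((1 + S) * X)) * 1 := mul_le_mul_of_nonneg_left hWu hEG0
        _ = Real.exp (2 * (μ D - p D * ρ - r D)) * Real.exp (2 * r D) *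
            ((1 + S) * X) := mul_one _
        _ ≤ Real.exp (2 * S) * R * ((1 + S) * X) :=
            mul_le_mul_of_nonneg_right
              (mul_le_mul hE (hG D) (Real.exp_pos _).le (Real.exp_pos _).le)
              (mul_nonneg (by linarith) hX0)
        _ = R * Real.exp (2 * S) * (1 + S) * X := by ring
        _ ≤ R * Real.exp (2 * S) * (4 + S) * X :=
            mul_le_mul_of_nonneg_right
              (mul_le_mul_of_nonneg_left (by linarith : (1:ℝ) + S ≤ 4 + S)
                (mul_nonneg hR0 (Real.exp_pos _).le)) hX0
  -- sum up
  have hsum_eq : Real.exp (-2 * p (max A B) * ρ) *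
      (∑ D, Real.exp (2 * μ D) * Y D A * Y D B) -
      (if A = B then Real.exp (2 * r A) else 0) =
      ∑ D : Fin n, (Real.exp (-2 * p (max A B) * ρ) *
        (Real.exp (2 * μ D) * Y D A * Y D B) -
        (if A = B ∧ D = A then Real.exp (2 * r A) else 0)) := by
    rw [Finset.mul_sum, Finset.sum_sub_distrib]
    congr 1
    by_cases hAB : A = B <;> simp [hAB]
  rw [hsum_eq]
  calc |∑ D : Fin n, (Real.exp (-2 * p (max A B) * ρ) *
        (Real.exp (2 * μ D) * Y D A * Y D B) -
        (if A = B ∧ D = A then Real.exp (2 * r A) else 0))|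
      ≤ ∑ D : Fin n, |Real.exp (-2 * p (max A B) * ρ) *
        (Real.exp (2 * μ D) * Y D A * Y D B) -
        (if A = B ∧ D = A then Real.exp (2 * r A) else 0)| :=
        Finset.abs_sum_le_sum_abs _ _
    _ ≤ Finset.univ.card • (R * Real.exp (2 * S) * (4 + S) * X) :=
        Finset.sum_le_card_nsmul _ _ _ (fun D _ => key D)
    _ = (n : ℝ) * (R * Real.exp (2 * S) * (4 + S) * X) := by
        simp [nsmul_eq_mul]
    _ = (n : ℝ) * (R * Real.exp (2 * S) * (4 + S)) * C * jbr ρ ^ a *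
        Real.exp (2 * ε * ρ) := by
        rw [hX_def]; ring
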